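/- arXiv:2205.04573 — 6 statements merged into one kernel-verified Lean document; each statement's English description precedes it below -/
import Mathlib

section
/- Let Ω be a compact metrizable space, let 𝒫 ⊆ Δ(Ω) be a nonempty compact convex set of Borel probability measures, let 𝒫' ⊆ 𝒫 be a nonempty closed convex subset, and let P* ∈ Δ(Ω). Then P* ∈ 𝒫' if and only if for every act f : Ω → [0,1] and every real number x, inf_{P ∈ 𝒫'} ∫ f dP > x implies ∫ f dP* > x. (This is the characterization that the data-driven decision objectively dominates the data-free decision across all basic decision problems — binary choices between an uncertain act f and a constant act x — if and only if the updated set accommodates the true DGP.) -/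
open MeasureTheory Set BoundedContinuousFunction Filter
open scoped NNReal

/-- The maxmin expected-utility (MEU) value of an act `f` under a set `Q` of
probability measures: `inf_{P ∈ Q} ∫ f dP`. -/
noncomputable def MEU {Ω : Type*} [MeasurableSpace Ω]
    (Q : Set (ProbabilityMeasure Ω)) (f : Ω → ℝ) : ℝ :=
  sInf ((fun P : ProbabilityMeasure Ω => ∫ ω, f ω ∂(P : Measure Ω)) '' Q)

/-- **Theorem 1 (Basic decision problems).**  `P* ∈ Q` iff for every act
`f : Ω → [0,1]` and every real `x`, `inf_{P ∈ Q} ∫ f dP > x` implies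
`∫ f dP* > x`. -/
theorem accommodates_iff_dominates_basic
    {Ω : Type*} [MeasurableSpace Ω] [TopologicalSpace Ω] [BorelSpace Ω]
    [CompactSpace Ω] [TopologicalSpace.MetrizableSpace Ω]
    (P Q : Set (ProbabilityMeasure Ω))
    (hPne : P.Nonempty) (hPcpt : IsCompact P)
    (hPconv : Convex ℝ≥0 (ProbabilityMeasure.toMeasure '' P))
    (hQne : Q.Nonempty) (hQsub : Q ⊆ P) (hQcl : IsClosed Q)
    (hQconv : Convex ℝ≥0 (ProbabilityMeasure.toMeasure '' Q))
    (Pstar : ProbabilityMeasure Ω) :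
    Pstar ∈ Q ↔
      ∀ f : Ω → ℝ, Measurable f → (∀ ω, f ω ∈ Icc (0 : ℝ) 1) →
        ∀ x : ℝ, MEU Q f > x → (∫ ω, f ω ∂(Pstar : Measure Ω)) > x := by
  classical
  constructor
  · intro hPQ f hf hf01 x hx
    have hbdd : BddBelow ((fun P : ProbabilityMeasure Ω => ∫ ω, f ω ∂(P : Measure Ω)) '' Q) := by
      refine ⟨0, ?_⟩
      rintro _ ⟨R, hR, rfl⟩
      exact integral_nonneg fun ω => (hf01 ω).1
    exact lt_of_lt_of_le hx (csInf_le hbdd ⟨Pstar, hPQ, rfl⟩)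
  · intro h
    by_contra hPs
    -- the evaluation map into the product space
    set Ψ : ProbabilityMeasure Ω → ((Ω →ᵇ ℝ) → ℝ) :=
      fun μ g => ∫ ω, g ω ∂(μ : Measure Ω) with hΨdef
    have hcont : ∀ g : Ω →ᵇ ℝ,
        Continuous fun μ : ProbabilityMeasure Ω => ∫ ω, g ω ∂(μ : Measure Ω) :=
      fun g => ProbabilityMeasure.continuous_integral_boundedContinuousFunction g
    have hΨcont : Continuous Ψ := continuous_pi fun g => hcont g
    have hΨinj : Function.Injective Ψ := by
      intro μ ν hμν
      have h1 : Tendsto (fun _ : ℕ => μ) atTop (nhds ν) := by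
        rw [ProbabilityMeasure.tendsto_iff_forall_integral_tendsto]
        intro g
        have : ∫ ω, g ω ∂(μ : Measure Ω) = ∫ ω, g ω ∂(ν : Measure Ω) := congrFun hμν g
        rw [this]
        exact tendsto_const_nhds
      exact tendsto_nhds_unique tendsto_const_nhds h1
    have hQcpt : IsCompact Q := hPcpt.of_isClosed_subset hQcl hQsub
    have hΨQclosed : IsClosed (Ψ '' Q) := (hQcpt.image hΨcont).isClosed
    have hΨnm : Ψ Pstar ∉ Ψ '' Q := by
      rintro ⟨R, hR, hRe⟩
      exact hPs (hΨinj hRe ▸ hR)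
    obtain ⟨I, u, hu, hsub⟩ := isOpen_pi_iff.mp hΨQclosed.isOpen_compl (Ψ Pstar) hΨnm
    -- map into the finite-dimensional space
    set T : ProbabilityMeasure Ω → (↥I → ℝ) :=
      fun μ i => ∫ ω, (i : Ω →ᵇ ℝ) ω ∂(μ : Measure Ω) with hTdef
    have hTcont : Continuous T := continuous_pi fun i => hcont i
    have hTnm : T Pstar ∉ T '' Q := by
      rintro ⟨R, hR, hRe⟩
      have hmem : Ψ R ∈ (↑I : Set (Ω →ᵇ ℝ)).pi u := by
        intro g hg
        have h1 : T R ⟨g, hg⟩ = T Pstar ⟨g, hg⟩ := congrFun hRe _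
        have h2 : Ψ R g = Ψ Pstar g := h1
        rw [h2]
        exact (hu g hg).2
      exact hsub hmem ⟨R, hR, rfl⟩
    have hTclosed : IsClosed (T '' Q) := (hQcpt.image hTcont).isClosed
    have hTconv : Convex ℝ (T '' Q) := by
      rintro _ ⟨μ₁, h₁, rfl⟩ _ ⟨μ₂, h₂, rfl⟩ a b ha hb hab
      have habN : a.toNNReal + b.toNNReal = 1 := by
        rw [← Real.toNNReal_add ha hb, hab]; simp
      obtain ⟨ν, hν, hνeq⟩ := hQconv ⟨μ₁, h₁, rfl⟩ ⟨μ₂, h₂, rfl⟩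
        zero_le zero_le habN
      refine ⟨ν, hν, ?_⟩
      funext i
      show (∫ ω, (i : Ω →ᵇ ℝ) ω ∂(ν : Measure Ω)) = a * T μ₁ i + b * T μ₂ i
      have hco : (ν : Measure Ω)
          = a.toNNReal • (μ₁ : Measure Ω) + b.toNNReal • (μ₂ : Measure Ω) := hνeq
      rw [hco, integral_add_measure ((i : Ω →ᵇ ℝ).integrable _) ((i : Ω →ᵇ ℝ).integrable _),
        integral_smul_nnreal_measure, integral_smul_nnreal_measure]
      simp only [NNReal.smul_def, Real.coe_toNNReal a ha, Real.coe_toNNReal b hb,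
        smul_eq_mul]
      rfl
    obtain ⟨L, v, hLv, hvL⟩ := geometric_hahn_banach_point_closed hTconv hTclosed hTnm
    -- express L ∘ T as the integral of a bounded continuous function
    set c : ↥I → ℝ := fun i => L (fun j => if i = j then 1 else 0) with hcdef
    set G : Ω →ᵇ ℝ := ∑ i : ↥I, c i • (i : Ω →ᵇ ℝ) with hGdef
    have hGapply : ∀ ω, G ω = ∑ i : ↥I, c i * (i : Ω →ᵇ ℝ) ω := by
      intro ω
      rw [hGdef]
      simp
    have hGint : ∀ μ : ProbabilityMeasure Ω,
        ∫ ω, G ω ∂(μ : Measure Ω) = L (T μ) := by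
      intro μ
      have h1 : ∫ ω, G ω ∂(μ : Measure Ω)
          = ∑ i : ↥I, c i * ∫ ω, (i : Ω →ᵇ ℝ) ω ∂(μ : Measure Ω) := by
        calc ∫ ω, G ω ∂(μ : Measure Ω)
            = ∫ ω, ∑ i : ↥I, c i * (i : Ω →ᵇ ℝ) ω ∂(μ : Measure Ω) := by
              simp_rw [hGapply]
          _ = ∑ i : ↥I, ∫ ω, c i * (i : Ω →ᵇ ℝ) ω ∂(μ : Measure Ω) :=
              integral_finset_sum _ fun i _ => ((i : Ω →ᵇ ℝ).integrable _).const_mul _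
          _ = ∑ i : ↥I, c i * ∫ ω, (i : Ω →ᵇ ℝ) ω ∂(μ : Measure Ω) := by
              simp_rw [← smul_eq_mul, integral_smul]
      have h2 : L (T μ) = ∑ i : ↥I, c i * T μ i := by
        conv_lhs => rw [pi_eq_sum_univ (T μ)]
        rw [map_sum]
        congr 1; ext i
        rw [ContinuousLinearMap.map_smul, smul_eq_mul, mul_comm]
      rw [h1, h2]
    have hGP : ∀ R ∈ Q, v < ∫ ω, G ω ∂(R : Measure Ω) := fun R hR => by
      rw [hGint R]; exact hvL _ ⟨R, hR, rfl⟩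
    have hGPs : (∫ ω, G ω ∂(Pstar : Measure Ω)) < v := by
      rw [hGint Pstar]; exact hLv
    -- normalize into [0,1]
    set M : ℝ := ‖G‖ + 1 with hMdef
    have hM : 0 < M := by positivity
    set f : Ω → ℝ := fun ω => (G ω + M) / (2 * M) with hfdef
    have hfm : Measurable f := ((G.continuous.measurable).add_const M).div_const _
    have hf01 : ∀ ω, f ω ∈ Icc (0 : ℝ) 1 := by
      intro ω
      have h1 : |G ω| ≤ ‖G‖ := by
        simpa [Real.norm_eq_abs] using G.norm_coe_le_norm ω
      obtain ⟨ha, hb⟩ := abs_le.mp h1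
      constructor
      · apply div_nonneg (by simp only [hMdef]; linarith) (by linarith)
      · rw [div_le_one (by linarith)]
        simp only [hMdef]; linarith
    have hint : ∀ μ : ProbabilityMeasure Ω,
        ∫ ω, f ω ∂(μ : Measure Ω) = ((∫ ω, G ω ∂(μ : Measure Ω)) + M) / (2 * M) := by
      intro μ
      have hadd : ∫ ω, (G ω + M) ∂(μ : Measure Ω)
          = (∫ ω, G ω ∂(μ : Measure Ω)) + M := by
        rw [integral_add (G.integrable _) (integrable_const M), integral_const]
        simp
      calc ∫ ω, f ω ∂(μ : Measure Ω)
          = (∫ ω, (G ω + M) ∂(μ : Measure Ω)) / (2 * M) := by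
            simp_rw [hfdef, integral_div]
        _ = ((∫ ω, G ω ∂(μ : Measure Ω)) + M) / (2 * M) := by rw [hadd]
    have hMEU : MEU Q f > ∫ ω, f ω ∂(Pstar : Measure Ω) := by
      have hle : (v + M) / (2 * M) ≤ MEU Q f := by
        apply le_csInf (hQne.image _)
        rintro _ ⟨R, hR, rfl⟩
        show (v + M) / (2 * M) ≤ ∫ ω, f ω ∂(R : Measure Ω)
        rw [hint R]
        exact (div_le_div_iff_of_pos_right (by linarith)).mpr (by linarith [hGP R hR])
      have hlt : (∫ ω, f ω ∂(Pstar : Measure Ω)) < (v + M) / (2 * M) := by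
        rw [hint Pstar]
        exact (div_lt_div_iff_of_pos_right (by linarith)).mpr (by linarith)
      exact lt_of_lt_of_le hlt hle
    exact lt_irrefl _ (h f hfm hf01 _ hMEU)
end

section
/- Let Ω be a compact metrizable space, let 𝒫 ⊆ Δ(Ω) be a nonempty compact convex set of Borel probability measures, and let 𝒫' ⊆ 𝒫 be a nonempty closed convex subset. Then 𝒫' is a strict subset of 𝒫 if and only if there exist an act f : Ω → [0,1] and a constant x ∈ [0,1] such that inf_{P ∈ 𝒫'} ∫ f dP > x ≥ inf_{P ∈ 𝒫} ∫ f dP. (This is the strictness part of Theorem 1: the data-driven decision strictly improves on the data-free decision in some basic decision problem if and only if the updated set refines the initial set.) -/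
open MeasureTheory Set
open scoped NNReal BoundedContinuousFunction

/-- Two distinct Borel probability measures on a pseudometrizable space are
separated by some bounded continuous real-valued function. -/
lemma exists_bcf_integral_ne {Ω : Type*} [MeasurableSpace Ω] [TopologicalSpace Ω]
    [BorelSpace Ω] [TopologicalSpace.PseudoMetrizableSpace Ω]
    {μ ν : ProbabilityMeasure Ω} (h : μ ≠ ν) :
    ∃ g : Ω →ᵇ ℝ, ∫ ω, g ω ∂(μ : Measure Ω) ≠ ∫ ω, g ω ∂(ν : Measure Ω) := by
  by_contra hc
  push_neg at hc
  apply h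
  apply MeasureTheory.ProbabilityMeasure.toMeasure_injective
  apply MeasureTheory.ext_of_forall_lintegral_eq_of_IsFiniteMeasure
  intro f
  have hfin1 := (BoundedContinuousFunction.lintegral_lt_top_of_nnreal (μ : Measure Ω) f).ne
  have hfin2 := (BoundedContinuousFunction.lintegral_lt_top_of_nnreal (ν : Measure Ω) f).ne
  have h1 := BoundedContinuousFunction.toReal_lintegral_coe_eq_integral f (μ : Measure Ω)
  have h2 := BoundedContinuousFunction.toReal_lintegral_coe_eq_integral f (ν : Measure Ω)
  have hg := hc (BoundedContinuousFunction.comp _ isometry_subtype_coe.lipschitz f)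
  apply (ENNReal.toReal_eq_toReal_iff' hfin1 hfin2).mp
  rw [h1, h2]
  exact hg

/-- **Theorem 1 (strictness part).** The updated set `Q` strictly refines the
initial set `P` iff some basic decision problem `{f, x}` yields a strict
improvement: `inf_{P ∈ Q} ∫ f dP > x ≥ inf_{P ∈ P} ∫ f dP`. -/
theorem strict_refine_iff_strict_basic_improvement
    {Ω : Type*} [MeasurableSpace Ω] [TopologicalSpace Ω] [BorelSpace Ω]
    [CompactSpace Ω] [TopologicalSpace.MetrizableSpace Ω]
    (P Q : Set (ProbabilityMeasure Ω))
    (hPne : P.Nonempty) (hPcpt : IsCompact P)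
    (hPconv : Convex ℝ≥0 (ProbabilityMeasure.toMeasure '' P))
    (hQne : Q.Nonempty) (hQsub : Q ⊆ P) (hQcl : IsClosed Q)
    (hQconv : Convex ℝ≥0 (ProbabilityMeasure.toMeasure '' Q)) :
    Q ⊂ P ↔
      ∃ f : Ω → ℝ, Measurable f ∧ (∀ ω, f ω ∈ Icc (0 : ℝ) 1) ∧
        ∃ x ∈ Icc (0 : ℝ) 1, MEU Q f > x ∧ x ≥ MEU P f := by
  classical
  constructor
  · -- forward direction
    intro hss
    obtain ⟨P₀, hP₀P, hP₀Q⟩ := exists_of_ssubset hss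
    have hQcpt : IsCompact Q := hPcpt.of_isClosed_subset hQcl hQsub
    -- separating functions for each element of Q
    have key : ∀ μ : ProbabilityMeasure Ω, μ ∈ Q → ∃ g : Ω →ᵇ ℝ,
        ∫ ω, g ω ∂(μ : Measure Ω) ≠ ∫ ω, g ω ∂(P₀ : Measure Ω) :=
      fun μ hμ => exists_bcf_integral_ne (fun h => hP₀Q (h ▸ hμ))
    choose g hg using key
    -- integration functional
    set I : (Ω →ᵇ ℝ) → ProbabilityMeasure Ω → ℝ :=
      fun h ν => ∫ ω, h ω ∂(ν : Measure Ω) with hI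
    have hIcont : ∀ h : Ω →ᵇ ℝ, Continuous (I h) := fun h =>
      MeasureTheory.ProbabilityMeasure.continuous_integral_boundedContinuousFunction h
    -- the cover
    set G : {m // m ∈ Q} → (Ω →ᵇ ℝ) := fun μ => g μ.1 μ.2 with hG
    set d : {m // m ∈ Q} → ℝ := fun μ => |I (G μ) μ.1 - I (G μ) P₀| with hd
    have hdpos : ∀ μ, 0 < d μ := fun μ =>
      abs_pos.mpr (sub_ne_zero.mpr (hg μ.1 μ.2))
    set U : {m // m ∈ Q} → Set (ProbabilityMeasure Ω) :=
      fun μ => (I (G μ)) ⁻¹' (Metric.ball (I (G μ) μ.1) (d μ / 2)) with hU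
    have hUopen : ∀ μ, IsOpen (U μ) := fun μ =>
      (Metric.isOpen_ball).preimage (hIcont (G μ))
    have hUcover : Q ⊆ ⋃ μ, U μ := by
      intro ν hν
      refine mem_iUnion.mpr ⟨⟨ν, hν⟩, ?_⟩
      simp only [hU, mem_preimage, Metric.mem_ball, dist_self]
      exact half_pos (hdpos ⟨ν, hν⟩)
    obtain ⟨t, ht⟩ := hQcpt.elim_finite_subcover U hUopen hUcover
    -- the finite-dimensional image map
    set Φ : ProbabilityMeasure Ω → ({m // m ∈ t} → ℝ) :=
      fun ν i => I (G i.1) ν with hΦ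
    have hΦcont : Continuous Φ := continuous_pi fun i => hIcont (G i.1)
    have hΦQcpt : IsCompact (Φ '' Q) := hQcpt.image hΦcont
    -- convexity of the image
    have haux : ∀ (μ₁ μ₂ : ProbabilityMeasure Ω), μ₁ ∈ Q → μ₂ ∈ Q →
        ∀ a b : ℝ, 0 ≤ a → 0 ≤ b → a + b = 1 →
        a • Φ μ₁ + b • Φ μ₂ ∈ Φ '' Q := by
      intro μ₁ μ₂ hμ₁ hμ₂ a b ha hb hab
      have hab' : a.toNNReal + b.toNNReal = 1 := by
        rw [← Real.toNNReal_add ha hb, hab, Real.toNNReal_one]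
      obtain ⟨σ, hσQ, hσeq⟩ := hQconv ⟨μ₁, hμ₁, rfl⟩ ⟨μ₂, hμ₂, rfl⟩
        zero_le zero_le hab'
      refine ⟨σ, hσQ, ?_⟩
      funext i
      have hint : ∀ (h : Ω →ᵇ ℝ),
          ∫ ω, h ω ∂(σ : Measure Ω) =
            a * ∫ ω, h ω ∂(μ₁ : Measure Ω) + b * ∫ ω, h ω ∂(μ₂ : Measure Ω) := by
        intro h
        have : (σ : Measure Ω) =
            a.toNNReal • (μ₁ : Measure Ω) + b.toNNReal • (μ₂ : Measure Ω) := hσeq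
        rw [this, integral_add_measure ((h.integrable _)) ((h.integrable _)),
          integral_smul_nnreal_measure, integral_smul_nnreal_measure]
        simp only [NNReal.smul_def, smul_eq_mul, Real.coe_toNNReal a ha,
          Real.coe_toNNReal b hb]
      simp only [hΦ, Pi.add_apply, Pi.smul_apply, smul_eq_mul]
      exact hint (G i.1)
    have hΦQconv : Convex ℝ (Φ '' Q) := by
      rintro _ ⟨μ₁, hμ₁, rfl⟩ _ ⟨μ₂, hμ₂, rfl⟩ a b ha hb hab
      exact haux μ₁ μ₂ hμ₁ hμ₂ a b ha hb hab
    -- Φ P₀ is not in the image of Q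
    have hnotin : Φ P₀ ∉ Φ '' Q := by
      rintro ⟨ν, hν, hΦν⟩
      obtain ⟨μ, hμt, hνU⟩ := mem_iUnion₂.mp (ht hν)
      have h1 : I (G μ) ν = I (G μ) P₀ := congrFun hΦν ⟨μ, hμt⟩
      simp only [hU, mem_preimage, Metric.mem_ball, Real.dist_eq] at hνU
      rw [h1] at hνU
      have h2 : d μ = |I (G μ) μ.1 - I (G μ) P₀| := rfl
      have h3 := abs_sub_comm (I (G μ) P₀) (I (G μ) μ.1)
      have := hdpos μ
      rw [h3] at hνU
      linarith [hνU, this, h2 ▸ hνU]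
    -- Hahn-Banach separation in the finite-dimensional space
    obtain ⟨L, u, hLP₀, hLQ⟩ :=
      geometric_hahn_banach_point_closed hΦQconv (hΦQcpt.isClosed) hnotin
    -- write L as a finite combination of coordinates
    set c : {m // m ∈ t} → ℝ := fun i => L (fun j => if i = j then 1 else 0) with hc
    have hL : ∀ v : {m // m ∈ t} → ℝ, L v = ∑ i, v i * c i := by
      intro v
      conv_lhs => rw [pi_eq_sum_univ v]
      rw [map_sum]
      simp only [_root_.map_smul, smul_eq_mul, hc]
    -- the separating bounded continuous function
    set F : Ω →ᵇ ℝ := ∑ i : {m // m ∈ t}, c i • G i.1 with hF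
    have hFint : ∀ ν : ProbabilityMeasure Ω,
        ∫ ω, F ω ∂(ν : Measure Ω) = L (Φ ν) := by
      intro ν
      have hcoe : ∀ ω, F ω = ∑ i : {m // m ∈ t}, c i * (G i.1) ω := by
        intro ω
        simp [hF]
      rw [hL (Φ ν)]
      calc ∫ ω, F ω ∂(ν : Measure Ω)
          = ∫ ω, (∑ i : {m // m ∈ t}, c i * (G i.1) ω) ∂(ν : Measure Ω) := by
            exact integral_congr_ae (Filter.Eventually.of_forall hcoe)
        _ = ∑ i : {m // m ∈ t}, ∫ ω, c i * (G i.1) ω ∂(ν : Measure Ω) := by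
            exact integral_finset_sum _ fun i _ => ((G i.1).integrable _).const_mul _
        _ = ∑ i : {m // m ∈ t}, Φ ν i * c i := by
            refine Finset.sum_congr rfl fun i _ => ?_
            rw [MeasureTheory.integral_const_mul, mul_comm]
    have hFP₀ : ∫ ω, F ω ∂(P₀ : Measure Ω) < u := by rw [hFint]; exact hLP₀
    have hFQ : ∀ ν ∈ Q, u < ∫ ω, F ω ∂(ν : Measure Ω) := by
      intro ν hν
      rw [hFint]
      exact hLQ _ ⟨ν, hν, rfl⟩
    -- normalize F to take values in [0,1]
    set C : ℝ := ‖F‖ with hCdef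
    have hC0 : 0 ≤ C := norm_nonneg F
    have hden : (0 : ℝ) < 2 * C + 1 := by linarith
    set f : Ω → ℝ := fun ω => (F ω + C) / (2 * C + 1) with hf
    have hbound : ∀ ω, |F ω| ≤ C := fun ω => F.norm_coe_le_norm ω
    have hrange : ∀ ω, f ω ∈ Icc (0 : ℝ) 1 := by
      intro ω
      have h₁ := (abs_le.mp (hbound ω)).1
      have h₂ := (abs_le.mp (hbound ω)).2
      constructor
      · apply div_nonneg _ hden.le; linarith
      · rw [div_le_one hden]; linarith
    have hmeas : Measurable f := by
      exact (F.continuous.measurable.add_const C).div_const _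
    have hintf : ∀ ν : ProbabilityMeasure Ω,
        ∫ ω, f ω ∂(ν : Measure Ω) = (∫ ω, F ω ∂(ν : Measure Ω) + C) / (2 * C + 1) := by
      intro ν
      simp only [hf]
      rw [integral_div, integral_add (F.integrable _) (integrable_const C),
        integral_const]
      simp [measure_univ]
    -- establish the MEU inequalities
    set u' : ℝ := (u + C) / (2 * C + 1) with hu'
    have hSPne : ((fun P : ProbabilityMeasure Ω => ∫ ω, f ω ∂(P : Measure Ω)) '' P).Nonempty :=
      hPne.image _
    have hSQne : ((fun P : ProbabilityMeasure Ω => ∫ ω, f ω ∂(P : Measure Ω)) '' Q).Nonempty :=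
      hQne.image _
    have hbddP : BddBelow ((fun P : ProbabilityMeasure Ω => ∫ ω, f ω ∂(P : Measure Ω)) '' P) := by
      refine ⟨0, ?_⟩
      rintro _ ⟨ν, hν, rfl⟩
      exact integral_nonneg fun ω => (hrange ω).1
    have hfle1 : ∀ ν : ProbabilityMeasure Ω, ∫ ω, f ω ∂(ν : Measure Ω) ≤ 1 := by
      intro ν
      have hint : Integrable f (ν : Measure Ω) :=
        ((F.integrable _).add (integrable_const C)).div_const _
      calc ∫ ω, f ω ∂(ν : Measure Ω) ≤ ∫ _, (1 : ℝ) ∂(ν : Measure Ω) :=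
            integral_mono hint (integrable_const 1) fun ω => (hrange ω).2
        _ = 1 := by simp [measure_univ]
    refine ⟨f, hmeas, hrange, MEU P f, ⟨?_, ?_⟩, ?_, le_refl _⟩
    · -- 0 ≤ MEU P f
      exact le_csInf hSPne (by rintro _ ⟨ν, hν, rfl⟩; exact integral_nonneg fun ω => (hrange ω).1)
    · -- MEU P f ≤ 1
      obtain ⟨ν₀, hν₀⟩ := hPne
      exact csInf_le_of_le hbddP ⟨ν₀, hν₀, rfl⟩ (hfle1 ν₀)
    · -- MEU Q f > MEU P f
      have hxle : MEU P f ≤ ∫ ω, f ω ∂(P₀ : Measure Ω) :=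
        csInf_le hbddP ⟨P₀, hP₀P, rfl⟩
      have hP₀lt : ∫ ω, f ω ∂(P₀ : Measure Ω) < u' := by
        rw [hintf P₀, hu']
        exact (div_lt_div_iff_of_pos_right hden).mpr (by linarith)
      have hQge : u' ≤ MEU Q f := by
        apply le_csInf hSQne
        rintro _ ⟨ν, hν, rfl⟩
        show u' ≤ ∫ ω, f ω ∂(ν : Measure Ω)
        rw [hintf ν, hu']
        exact le_of_lt ((div_lt_div_iff_of_pos_right hden).mpr (by linarith [hFQ ν hν]))
      exact lt_of_lt_of_le (lt_of_le_of_lt hxle hP₀lt) hQge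
  · -- reverse direction
    rintro ⟨f, hmeas, hrange, x, hx, hgt, hge⟩
    refine ⟨hQsub, fun hPQ => ?_⟩
    have hQP : Q = P := hQsub.antisymm hPQ
    rw [hQP] at hgt
    exact lt_irrefl _ (lt_of_le_of_lt hge hgt)
end

section
/- Let Ω be a compact metrizable space, let 𝒫 ⊆ Δ(Ω) be a nonempty compact convex set of Borel probability measures, let 𝒫' ⊆ 𝒫 be a nonempty closed convex subset, and let P* ∈ Δ(Ω). Then P* ∈ 𝒫' if and only if for all acts f, g : Ω → [0,1]: if inf_{P ∈ 𝒫'} ∫ g dP ≥ inf_{P ∈ 𝒫'} ∫ f dP, then ∫ g dP* ≥ inf_{P ∈ 𝒫} ∫ f dP. (This is the characterization that the data-driven decision objectively improves upon the data-free certainty equivalent across all decision problems if and only if the updated set accommodates the true DGP: whenever g is weakly better than f by the maxmin criterion under the updated set 𝒫', the objective payoff of g under P* is at least the worst-case expected payoff of f under the initial set 𝒫.) -/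
open MeasureTheory Set
open scoped NNReal BoundedContinuousFunction

/-- Separation of a probability measure from a compact convex set of probability
measures by a bounded continuous function. -/
lemma exists_separating_bcf {Ω : Type*} [MeasurableSpace Ω] [TopologicalSpace Ω] [BorelSpace Ω]
    [CompactSpace Ω] [TopologicalSpace.MetrizableSpace Ω]
    {Q : Set (ProbabilityMeasure Ω)} (hQcpt : IsCompact Q)
    (hQconv : Convex ℝ≥0 (ProbabilityMeasure.toMeasure '' Q))
    {Pstar : ProbabilityMeasure Ω} (hPs : Pstar ∉ Q) :
    ∃ (g : Ω →ᵇ ℝ) (c : ℝ), (∫ ω, g ω ∂(Pstar : Measure Ω)) < c ∧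
      ∀ μ ∈ Q, c < ∫ ω, g ω ∂(μ : Measure Ω) := by
  classical
  set Ψ : ProbabilityMeasure Ω → ((Ω →ᵇ ℝ) → ℝ) :=
    (fun μ f => ∫ ω, f ω ∂(μ : Measure Ω)) with hΨdef
  have contΨ : Continuous Ψ := continuous_pi fun f =>
    ProbabilityMeasure.continuous_integral_boundedContinuousFunction f
  have injΨ : Function.Injective Ψ := by
    intro μ ν h
    apply ProbabilityMeasure.toMeasure_injective
    apply MeasureTheory.ext_of_forall_lintegral_eq_of_IsFiniteMeasure
    intro f
    have hiso : Isometry ((↑) : ℝ≥0 → ℝ) := fun _ _ => rfl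
    have hlip : LipschitzWith 1 ((↑) : ℝ≥0 → ℝ) := hiso.lipschitz
    set fR : Ω →ᵇ ℝ := BoundedContinuousFunction.comp _ hlip f with hfR
    have h1 : ∫ ω, fR ω ∂(μ : Measure Ω) = ∫ ω, fR ω ∂(ν : Measure Ω) := congrFun h fR
    have fin1 : ∫⁻ x, f x ∂(μ : Measure Ω) ≠ ⊤ :=
      (BoundedContinuousFunction.lintegral_lt_top_of_nnreal _ f).ne
    have fin2 : ∫⁻ x, f x ∂(ν : Measure Ω) ≠ ⊤ :=
      (BoundedContinuousFunction.lintegral_lt_top_of_nnreal _ f).ne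
    rw [← ENNReal.toReal_eq_toReal_iff' fin1 fin2,
      BoundedContinuousFunction.toReal_lintegral_coe_eq_integral,
      BoundedContinuousFunction.toReal_lintegral_coe_eq_integral]
    exact h1
  have hKcpt : IsCompact (Ψ '' Q) := hQcpt.image contΨ
  have hvK : Ψ Pstar ∉ Ψ '' Q := by
    rintro ⟨σ, hσ, hEq⟩
    exact hPs ((injΨ hEq) ▸ hσ)
  have hnhds : (Ψ '' Q)ᶜ ∈ nhds (Ψ Pstar) := hKcpt.isClosed.isOpen_compl.mem_nhds hvK
  rw [nhds_pi, Filter.mem_pi] at hnhds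
  obtain ⟨I, hIfin, t, ht, hsub⟩ := hnhds
  haveI := hIfin.fintype
  set φc : ProbabilityMeasure Ω → (↥I → ℝ) :=
    (fun μ i => ∫ ω, (i : Ω →ᵇ ℝ) ω ∂(μ : Measure Ω)) with hφcdef
  have contφc : Continuous φc := continuous_pi fun i =>
    ProbabilityMeasure.continuous_integral_boundedContinuousFunction (i : Ω →ᵇ ℝ)
  have hK'cpt : IsCompact (φc '' Q) := hQcpt.image contφc
  have hK'conv : Convex ℝ (φc '' Q) := by
    rintro x ⟨μ, hμ, rfl⟩ y ⟨ν, hν, rfl⟩ a b ha hb hab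
    have hab' : a.toNNReal + b.toNNReal = 1 := by
      rw [← Real.toNNReal_add ha hb, hab, Real.toNNReal_one]
    have hmem := hQconv (Set.mem_image_of_mem _ hμ) (Set.mem_image_of_mem _ hν)
      (show (0:ℝ≥0) ≤ a.toNNReal from zero_le) (show (0:ℝ≥0) ≤ b.toNNReal from zero_le) hab'
    obtain ⟨σ, hσ, hσeq⟩ := hmem
    refine ⟨σ, hσ, ?_⟩
    funext i
    show ∫ ω, (i : Ω →ᵇ ℝ) ω ∂(σ : Measure Ω)
      = a * (∫ ω, (i : Ω →ᵇ ℝ) ω ∂(μ : Measure Ω)) + b * ∫ ω, (i : Ω →ᵇ ℝ) ω ∂(ν : Measure Ω)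
    rw [hσeq, integral_add_measure (BoundedContinuousFunction.integrable _ _)
        (BoundedContinuousFunction.integrable _ _),
      integral_smul_nnreal_measure, integral_smul_nnreal_measure]
    simp [NNReal.smul_def, Real.coe_toNNReal a ha, Real.coe_toNNReal b hb]
  have hv'K' : φc Pstar ∉ φc '' Q := by
    rintro ⟨σ, hσ, hEq⟩
    refine hsub (show Ψ σ ∈ I.pi t from ?_) ⟨σ, hσ, rfl⟩
    intro f hf
    have h2 : φc σ ⟨f, hf⟩ = φc Pstar ⟨f, hf⟩ := congrFun hEq ⟨f, hf⟩
    show Ψ σ f ∈ t f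
    have h3 : Ψ σ f = Ψ Pstar f := h2
    rw [h3]
    exact mem_of_mem_nhds (ht f)
  obtain ⟨L, u, hLv, hLK⟩ :=
    geometric_hahn_banach_point_closed hK'conv hK'cpt.isClosed hv'K'
  set e : ↥I → (↥I → ℝ) := fun i => Pi.single i 1 with hedef
  have hrep : ∀ x : ↥I → ℝ, L x = ∑ i, x i * L (e i) := by
    intro x
    have hx : x = ∑ i, x i • e i := by
      funext j
      simp [hedef, Pi.single_apply, Finset.sum_apply, mul_ite]
    conv_lhs => rw [hx]
    rw [map_sum]
    simp [smul_eq_mul]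
  set g : Ω →ᵇ ℝ := ∑ i, L (e i) • (i : Ω →ᵇ ℝ) with hgdef
  have hg : ∀ μ : ProbabilityMeasure Ω, ∫ ω, g ω ∂(μ : Measure Ω) = L (φc μ) := by
    intro μ
    rw [hrep (φc μ)]
    have hcoe : ∀ ω, g ω = ∑ i, L (e i) * (i : Ω →ᵇ ℝ) ω := by
      intro ω
      simp [hgdef]
    simp_rw [hcoe]
    rw [integral_finset_sum (f := fun (i : ↥I) (ω : Ω) => L (e i) * (i : Ω →ᵇ ℝ) ω) _ (fun i _ =>
      ((BoundedContinuousFunction.integrable _ (i : Ω →ᵇ ℝ))).const_mul _)]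
    refine Finset.sum_congr rfl fun i _ => ?_
    rw [integral_const_mul]
    ring
  refine ⟨g, u, ?_, ?_⟩
  · rw [hg Pstar]; exact hLv
  · intro μ hμ
    rw [hg μ]
    exact hLK _ ⟨μ, hμ, rfl⟩

/-- **Theorem 3 (certainty-equivalent improvement).** `P* ∈ Q` iff for all acts
`f, g : Ω → [0,1]`: whenever `g` is weakly better than `f` by the maxmin
criterion under the updated set `Q`, the objective payoff of `g` under `P*` is
at least the worst-case expected payoff of `f` under the initial set `P`. -/
theorem accommodates_iff_improves_certainty_equivalent
    {Ω : Type*} [MeasurableSpace Ω] [TopologicalSpace Ω] [BorelSpace Ω]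
    [CompactSpace Ω] [TopologicalSpace.MetrizableSpace Ω]
    (P Q : Set (ProbabilityMeasure Ω))
    (hPne : P.Nonempty) (hPcpt : IsCompact P)
    (hPconv : Convex ℝ≥0 (ProbabilityMeasure.toMeasure '' P))
    (hQne : Q.Nonempty) (hQsub : Q ⊆ P) (hQcl : IsClosed Q)
    (hQconv : Convex ℝ≥0 (ProbabilityMeasure.toMeasure '' Q))
    (Pstar : ProbabilityMeasure Ω) :
    Pstar ∈ Q ↔
      ∀ f g : Ω → ℝ,
        Measurable f → (∀ ω, f ω ∈ Icc (0 : ℝ) 1) →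
        Measurable g → (∀ ω, g ω ∈ Icc (0 : ℝ) 1) →
        MEU Q g ≥ MEU Q f →
        (∫ ω, g ω ∂(Pstar : Measure Ω)) ≥ MEU P f := by
  constructor
  · intro hmem f g hf hf01 hg hg01 hMEU
    have hbQg : BddBelow ((fun μ : ProbabilityMeasure Ω => ∫ ω, g ω ∂(μ : Measure Ω)) '' Q) := by
      refine ⟨0, ?_⟩
      rintro y ⟨μ, _, rfl⟩
      exact integral_nonneg fun ω => (hg01 ω).1
    have hbPf : BddBelow ((fun μ : ProbabilityMeasure Ω => ∫ ω, f ω ∂(μ : Measure Ω)) '' P) := by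
      refine ⟨0, ?_⟩
      rintro y ⟨μ, _, rfl⟩
      exact integral_nonneg fun ω => (hf01 ω).1
    have h1 : MEU Q g ≤ ∫ ω, g ω ∂(Pstar : Measure Ω) :=
      csInf_le hbQg ⟨Pstar, hmem, rfl⟩
    have h2 : MEU P f ≤ MEU Q f :=
      csInf_le_csInf hbPf (hQne.image _) (fun _ ⟨x, hx, h⟩ => ⟨x, hQsub hx, h⟩)
    calc MEU P f ≤ MEU Q f := h2
      _ ≤ MEU Q g := hMEU
      _ ≤ _ := h1
  · intro H
    by_contra hPs
    have hQcpt : IsCompact Q := hPcpt.of_isClosed_subset hQcl hQsub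
    obtain ⟨g, c, hlt, hgt⟩ := exists_separating_bcf hQcpt hQconv hPs
    set M : ℝ := ‖g‖ with hM
    have hM0 : 0 ≤ M := norm_nonneg g
    set b : ℝ := 2 * M + 1 with hb
    have hb0 : (0 : ℝ) < b := by positivity
    set g' : Ω → ℝ := fun ω => (g ω + M) / b with hg'def
    have hgabs : ∀ ω, |g ω| ≤ M := fun ω => by
      simpa [Real.norm_eq_abs] using g.norm_coe_le_norm ω
    have hg'mble : Measurable g' :=
      ((g.continuous.measurable).add_const M).div_const b
    have hg'01 : ∀ ω, g' ω ∈ Icc (0 : ℝ) 1 := by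
      intro ω
      have h1 := (abs_le.mp (hgabs ω)).1
      have h2 := (abs_le.mp (hgabs ω)).2
      constructor
      · apply div_nonneg _ hb0.le; linarith
      · rw [div_le_one hb0]; linarith
    -- bounds on c
    have hPstar_lb : -M ≤ ∫ ω, g ω ∂(Pstar : Measure Ω) := by
      have := BoundedContinuousFunction.norm_integral_le_norm (μ := (Pstar : Measure Ω)) g
      rw [Real.norm_eq_abs, abs_le] at this
      exact this.1
    have hQne' := hQne
    obtain ⟨μ₀, hμ₀⟩ := hQne'
    have hc_ub : c ≤ M := by
      have hle : ∫ ω, g ω ∂(μ₀ : Measure Ω) ≤ M := by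
        have := BoundedContinuousFunction.norm_integral_le_norm (μ := (μ₀ : Measure Ω)) g
        rw [Real.norm_eq_abs, abs_le] at this
        exact this.2
      exact le_trans (hgt μ₀ hμ₀).le hle
    have hc_lb : -M ≤ c := le_trans hPstar_lb hlt.le
    set c' : ℝ := (c + M) / b with hc'
    have hc'01 : c' ∈ Icc (0 : ℝ) 1 := by
      constructor
      · apply div_nonneg _ hb0.le; linarith
      · rw [div_le_one hb0]; linarith
    -- integral formula for g'
    have hint : ∀ μ : ProbabilityMeasure Ω,
        ∫ ω, g' ω ∂(μ : Measure Ω) = ((∫ ω, g ω ∂(μ : Measure Ω)) + M) / b := by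
      intro μ
      rw [hg'def]
      rw [integral_div]
      congr 1
      rw [integral_add (BoundedContinuousFunction.integrable _ g) (integrable_const M)]
      simp
    -- MEU of the constant act
    have hconst : ∀ (R : Set (ProbabilityMeasure Ω)), R.Nonempty →
        MEU R (fun _ => c') = c' := by
      intro R hR
      have himg : (fun μ : ProbabilityMeasure Ω => ∫ ω, (fun _ => c') ω ∂(μ : Measure Ω)) '' R
          = {c'} := by
        apply Set.eq_singleton_iff_nonempty_unique_mem.mpr
        refine ⟨hR.image _, ?_⟩
        rintro y ⟨μ, _, rfl⟩
        simp
      rw [MEU, himg, csInf_singleton]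
    have hMEUg' : MEU Q g' ≥ MEU Q (fun _ => c') := by
      rw [hconst Q hQne]
      apply le_csInf (hQne.image _)
      rintro y ⟨μ, hμ, rfl⟩
      show c' ≤ ∫ ω, g' ω ∂(μ : Measure Ω)
      rw [hint μ, hc']
      have h5 := (hgt μ hμ).le
      gcongr
    have hfinal := H (fun _ => c') g' measurable_const (fun _ => hc'01) hg'mble hg'01 hMEUg'
    rw [hconst P hPne] at hfinal
    rw [hint Pstar] at hfinal
    have : ((∫ ω, g ω ∂(Pstar : Measure Ω)) + M) / b < c' := by
      rw [hc']
      gcongr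
    linarith
end

section
/- Let Ω be a compact metrizable space, let 𝒫 ⊆ Δ(Ω) be a nonempty compact convex set of Borel probability measures, let 𝒫' ⊆ 𝒫 be a nonempty closed convex subset, and let P* ∈ Δ(Ω). The following three conditions are equivalent: (i) P* ∈ 𝒫'; (ii) for every act f : Ω → [0,1] and every real number x, inf_{P ∈ 𝒫'} ∫ f dP > x implies ∫ f dP* > x; (iii) for all acts f, g : Ω → [0,1], if inf_{P ∈ 𝒫'} ∫ g dP ≥ inf_{P ∈ 𝒫'} ∫ f dP then ∫ g dP* ≥ inf_{P ∈ 𝒫} ∫ f dP. (Three-way equivalence: the updated set accommodates the true DGP, iff the data-driven decision objectively dominates the data-free decision across all basic decision problems, iff it objectively improves upon the data-free certainty equivalent across all decision problems.) -/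
open MeasureTheory Set
open scoped NNReal BoundedContinuousFunction

section Aux

/-- Every weak-star continuous linear functional on a weak dual is evaluation at a point. -/
lemma weakDual_clm_eval {E : Type*} [NormedAddCommGroup E] [NormedSpace ℝ E]
    (φ : WeakDual ℝ E →L[ℝ] ℝ) : ∃ g : E, ∀ x : WeakDual ℝ E, φ x = x g := by
  have hne : Nonempty E := ⟨0⟩
  set B := topDualPairing ℝ E with hB
  have hp := LinearMap.weakBilin_withSeminorms B
  have hq : Continuous (LinearMap.toSeminorm (φ : WeakDual ℝ E →ₗ[ℝ] ℝ)) := by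
    rw [LinearMap.coe_toSeminorm]
    exact φ.continuous.norm
  obtain ⟨s, C, hC, hle⟩ := Seminorm.bound_of_continuous hp _ hq
  let L : s → (WeakDual ℝ E →ₗ[ℝ] ℝ) := fun i => (B.flip (i : E) : WeakDual ℝ E →ₗ[ℝ] ℝ)
  have hker : ⨅ i, LinearMap.ker (L i) ≤ LinearMap.ker (φ : WeakDual ℝ E →ₗ[ℝ] ℝ) := by
    intro x hx
    simp only [Submodule.mem_iInf, LinearMap.mem_ker] at hx
    have h0 : (s.sup B.toSeminormFamily) x ≤ 0 := by
      refine Seminorm.finset_sup_apply_le le_rfl (fun i hi => ?_)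
      have hxi := hx ⟨i, hi⟩
      simp only [L] at hxi
      simp [LinearMap.toSeminormFamily, LinearMap.toSeminorm_apply]
      exact norm_le_zero_iff.2 hxi
    have h0' : (s.sup B.toSeminormFamily) x = 0 :=
      le_antisymm h0 (apply_nonneg _ _)
    have h := hle x
    simp only [Seminorm.smul_apply, LinearMap.toSeminorm_apply] at h
    rw [LinearMap.mem_ker]
    refine norm_le_zero_iff.1 (h.trans ?_)
    show (C : ℝ) * _ ≤ 0
    exact mul_nonpos_iff.2 (Or.inl ⟨C.coe_nonneg, h0⟩)
  have hspan := mem_span_of_iInf_ker_le_ker hker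
  obtain ⟨c, hc⟩ := (Submodule.mem_span_range_iff_exists_fun ℝ).1 hspan
  refine ⟨∑ i : s, c i • (i : E), fun x => ?_⟩
  have hx := congrArg (fun ψ : WeakDual ℝ E →ₗ[ℝ] ℝ => ψ x) hc
  simp only [LinearMap.coe_sum, Finset.sum_apply, LinearMap.smul_apply] at hx
  have hxg : x (∑ i : s, c i • (i : E)) = ∑ i : s, c i • (x (i : E)) := by
    rw [map_sum]
    exact Finset.sum_congr rfl fun i _ => by rw [_root_.map_smul]
  rw [hxg]
  exact hx.symm

lemma weakDual_locallyConvex {E : Type*} [NormedAddCommGroup E] [NormedSpace ℝ E] :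
    LocallyConvexSpace ℝ (WeakDual ℝ E) := by
  have hne : Nonempty E := ⟨0⟩
  have hws := LinearMap.weakBilin_withSeminorms (topDualPairing ℝ E)
  exact hws.toLocallyConvexSpace

variable {Ω : Type*} [MeasurableSpace Ω] [TopologicalSpace Ω] [OpensMeasurableSpace Ω]

/-- The integration functional of a probability measure, as an element of the weak dual of
bounded continuous functions. -/
noncomputable def probFunctional (P : ProbabilityMeasure Ω) : WeakDual ℝ (Ω →ᵇ ℝ) :=
  LinearMap.mkContinuous
    { toFun := fun g : Ω →ᵇ ℝ => ∫ ω, g ω ∂(P : Measure Ω)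
      map_add' := fun g h => by
        simpa using integral_add (g.integrable _) (h.integrable _)
      map_smul' := fun c g => by
        simpa using integral_smul c (g : Ω → ℝ) }
    1 (fun g => by simpa using g.norm_integral_le_norm (P : Measure Ω))

lemma probFunctional_apply (P : ProbabilityMeasure Ω) (g : Ω →ᵇ ℝ) :
    probFunctional P g = ∫ ω, g ω ∂(P : Measure Ω) := rfl

lemma continuous_probFunctional : Continuous (probFunctional (Ω := Ω)) := by
  apply WeakBilin.continuous_of_continuous_eval
  intro g
  exact ProbabilityMeasure.continuous_integral_boundedContinuousFunction g

lemma probFunctional_injective [HasOuterApproxClosed Ω] [BorelSpace Ω] :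
    Function.Injective (probFunctional (Ω := Ω)) := by
  intro μ ν h
  have hint : ∀ g : Ω →ᵇ ℝ, ∫ ω, g ω ∂(μ : Measure Ω) = ∫ ω, g ω ∂(ν : Measure Ω) := by
    intro g
    have := congrArg (fun ψ : WeakDual ℝ (Ω →ᵇ ℝ) => ψ g) h
    simpa [probFunctional_apply] using this
  apply ProbabilityMeasure.toMeasure_injective
  apply ext_of_forall_lintegral_eq_of_IsFiniteMeasure
  intro f
  have lip : LipschitzWith 1 ((↑) : ℝ≥0 → ℝ) := isometry_subtype_coe.lipschitz
  have key : ∫ ω, ((f ω : ℝ)) ∂(μ : Measure Ω) = ∫ ω, ((f ω : ℝ)) ∂(ν : Measure Ω) :=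
    hint (BoundedContinuousFunction.comp _ lip f)
  rw [← BoundedContinuousFunction.toReal_lintegral_coe_eq_integral f (μ : Measure Ω),
      ← BoundedContinuousFunction.toReal_lintegral_coe_eq_integral f (ν : Measure Ω)] at key
  exact (ENNReal.toReal_eq_toReal_iff' (f.lintegral_lt_top_of_nnreal _).ne
    (f.lintegral_lt_top_of_nnreal _).ne).1 key

end Aux

section MEUlemmas

variable {Ω : Type*} [MeasurableSpace Ω]

lemma MEU_bddBelow {Q : Set (ProbabilityMeasure Ω)} {f : Ω → ℝ} (hf0 : ∀ ω, 0 ≤ f ω) :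
    BddBelow ((fun P : ProbabilityMeasure Ω => ∫ ω, f ω ∂(P : Measure Ω)) '' Q) := by
  refine ⟨0, fun r hr => ?_⟩
  obtain ⟨P, _, rfl⟩ := hr
  exact integral_nonneg hf0

lemma MEU_le_integral {Q : Set (ProbabilityMeasure Ω)} {f : Ω → ℝ} (hf0 : ∀ ω, 0 ≤ f ω)
    {P : ProbabilityMeasure Ω} (hP : P ∈ Q) :
    MEU Q f ≤ ∫ ω, f ω ∂(P : Measure Ω) :=
  csInf_le (MEU_bddBelow hf0) ⟨P, hP, rfl⟩

lemma MEU_nonneg {Q : Set (ProbabilityMeasure Ω)} (hQ : Q.Nonempty) {f : Ω → ℝ}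
    (hf0 : ∀ ω, 0 ≤ f ω) : 0 ≤ MEU Q f := by
  refine le_csInf (hQ.image _) (fun r hr => ?_)
  obtain ⟨P, _, rfl⟩ := hr
  exact integral_nonneg hf0

lemma MEU_le_one {Q : Set (ProbabilityMeasure Ω)} (hQ : Q.Nonempty) {f : Ω → ℝ}
    (hfm : Measurable f) (hf : ∀ ω, f ω ∈ Icc (0:ℝ) 1) : MEU Q f ≤ 1 := by
  obtain ⟨P, hP⟩ := hQ
  refine le_trans (MEU_le_integral (fun ω => (hf ω).1) hP) ?_
  have hint : Integrable f (P : Measure Ω) := by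
    refine Integrable.mono' (integrable_const 1) hfm.aestronglyMeasurable ?_
    exact Filter.Eventually.of_forall (fun ω => by
      rw [Real.norm_eq_abs, abs_le]
      exact ⟨le_trans (by norm_num) (hf ω).1, (hf ω).2⟩)
  calc ∫ ω, f ω ∂(P : Measure Ω) ≤ ∫ _, (1:ℝ) ∂(P : Measure Ω) :=
        integral_mono hint (integrable_const 1) (fun ω => (hf ω).2)
    _ = 1 := by simp

lemma MEU_mono {P Q : Set (ProbabilityMeasure Ω)} (hQP : Q ⊆ P) (hQ : Q.Nonempty)
    {f : Ω → ℝ} (hf0 : ∀ ω, 0 ≤ f ω) : MEU P f ≤ MEU Q f :=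
  csInf_le_csInf (MEU_bddBelow hf0) (hQ.image _) (Set.image_mono hQP)

lemma MEU_const {Q : Set (ProbabilityMeasure Ω)} (hQ : Q.Nonempty) (c : ℝ) :
    MEU Q (fun _ => c) = c := by
  unfold MEU
  have : (fun P : ProbabilityMeasure Ω => ∫ _, c ∂(P : Measure Ω)) = fun _ => c := by
    funext P; simp
  rw [this, Set.Nonempty.image_const hQ, csInf_singleton]

end MEUlemmas

section Separation

variable {Ω : Type*} [MeasurableSpace Ω] [TopologicalSpace Ω] [BorelSpace Ω]
  [TopologicalSpace.PseudoMetrizableSpace Ω]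

set_option maxHeartbeats 1000000 in
lemma exists_separating_act {Q : Set (ProbabilityMeasure Ω)} (hQne : Q.Nonempty)
    (hQcpt : IsCompact Q) (hQconv : Convex ℝ≥0 (ProbabilityMeasure.toMeasure '' Q))
    {Pstar : ProbabilityMeasure Ω} (hPs : Pstar ∉ Q) :
    ∃ f : Ω → ℝ, Measurable f ∧ (∀ ω, f ω ∈ Icc (0:ℝ) 1) ∧
      ∃ x : ℝ, ∫ ω, f ω ∂(Pstar : Measure Ω) < x ∧ x ≤ MEU Q f := by
  classical
  set T := probFunctional (Ω := Ω) with hT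
  set K := T '' Q with hK
  have hKcpt : IsCompact K := hQcpt.image continuous_probFunctional
  have hKcl : IsClosed K := hKcpt.isClosed
  have hKconv : Convex ℝ K := by
    rintro x ⟨P₁, hP₁, rfl⟩ y ⟨P₂, hP₂, rfl⟩ a b ha hb hab
    have hsum : a.toNNReal + b.toNNReal = 1 := by
      rw [← Real.toNNReal_add ha hb, hab, Real.toNNReal_one]
    have hmem := hQconv ⟨P₁, hP₁, rfl⟩ ⟨P₂, hP₂, rfl⟩ (show (0:ℝ≥0) ≤ a.toNNReal from zero_le)
      (show (0:ℝ≥0) ≤ b.toNNReal from zero_le) hsum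
    obtain ⟨P₃, hP₃, hμ₃⟩ := hmem
    refine ⟨P₃, hP₃, ?_⟩
    apply ContinuousLinearMap.ext
    intro g
    have h3 : (T P₃) g = ∫ ω, g ω ∂((P₃ : Measure Ω)) := rfl
    refine h3.trans ?_
    rw [hμ₃]
    have hadd : ∫ ω, g ω ∂(a.toNNReal • (P₁ : Measure Ω) + b.toNNReal • (P₂ : Measure Ω))
        = ∫ ω, g ω ∂(a.toNNReal • (P₁ : Measure Ω)) + ∫ ω, g ω ∂(b.toNNReal • (P₂ : Measure Ω)) :=
      integral_add_measure (g.integrable _) (g.integrable _)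
    rw [hadd, integral_smul_nnreal_measure, integral_smul_nnreal_measure]
    have ha' : (a.toNNReal : ℝ) = a := Real.coe_toNNReal a ha
    have hb' : (b.toNNReal : ℝ) = b := Real.coe_toNNReal b hb
    show a.toNNReal • (∫ ω, g ω ∂(P₁ : Measure Ω)) + b.toNNReal • (∫ ω, g ω ∂(P₂ : Measure Ω))
      = (a • T P₁ + b • T P₂) g
    have : (a • T P₁ + b • T P₂) g = a * (T P₁) g + b * (T P₂) g := rfl
    rw [this]
    simp only [NNReal.smul_def, smul_eq_mul, ha', hb']
    rfl
  have hnot : T Pstar ∉ K := by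
    rintro ⟨P₀, hP₀, hEq⟩
    exact hPs (probFunctional_injective hEq ▸ hP₀)
  haveI : LocallyConvexSpace ℝ (WeakDual ℝ (Ω →ᵇ ℝ)) := weakDual_locallyConvex
  obtain ⟨φ, u, h₁, h₂⟩ := geometric_hahn_banach_point_closed hKconv hKcl hnot
  obtain ⟨g₀, hg₀⟩ := weakDual_clm_eval φ
  set M := ‖g₀‖ with hM
  have hM0 : 0 ≤ M := norm_nonneg _
  set D : ℝ := 2 * M + 1 with hD
  have hD0 : (0:ℝ) < D := by positivity
  refine ⟨fun ω => (g₀ ω + M) / D, ?_, ?_, (u + M) / D, ?_, ?_⟩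
  · exact (g₀.continuous.measurable.add_const M).div_const D
  · intro ω
    have hb := g₀.norm_coe_le_norm ω
    rw [Real.norm_eq_abs, abs_le] at hb
    constructor
    · apply div_nonneg _ hD0.le
      linarith [hb.1]
    · rw [div_le_one hD0]
      linarith [hb.2]
  · have hint : ∀ R : ProbabilityMeasure Ω,
        ∫ ω, (g₀ ω + M) / D ∂(R : Measure Ω) = (∫ ω, g₀ ω ∂(R : Measure Ω) + M) / D := by
      intro R
      rw [integral_div]
      congr 1
      rw [integral_add (g₀.integrable _) (integrable_const M)]
      simp
    rw [hint, div_lt_div_iff_of_pos_right hD0]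
    have : φ (T Pstar) = ∫ ω, g₀ ω ∂(Pstar : Measure Ω) := by
      rw [hg₀]; rfl
    linarith [h₁, this.symm.trans_lt h₁]
  · refine le_csInf (hQne.image _) (fun r hr => ?_)
    obtain ⟨R, hR, rfl⟩ := hr
    have hint : ∫ ω, (g₀ ω + M) / D ∂(R : Measure Ω)
        = (∫ ω, g₀ ω ∂(R : Measure Ω) + M) / D := by
      rw [integral_div]
      congr 1
      rw [integral_add (g₀.integrable _) (integrable_const M)]
      simp
    show (u + M) / D ≤ ∫ ω, (g₀ ω + M) / D ∂(R : Measure Ω)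
    rw [hint]
    have hu : u < ∫ ω, g₀ ω ∂(R : Measure Ω) := by
      have := h₂ (T R) ⟨R, hR, rfl⟩
      rw [hg₀] at this
      exact this
    rw [div_le_div_iff_of_pos_right hD0]
    linarith

end Separation

/-- **Corollary (three-way equivalence).** (i) the updated set `Q` accommodates
the true DGP `P*`; (ii) the data-driven decision objectively dominates the
data-free decision across all basic decision problems; (iii) it objectively
improves upon the data-free certainty equivalent across all decision
problems. -/
theorem threeway_equivalence
    {Ω : Type*} [MeasurableSpace Ω] [TopologicalSpace Ω] [BorelSpace Ω]
    [CompactSpace Ω] [TopologicalSpace.MetrizableSpace Ω]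
    (P Q : Set (ProbabilityMeasure Ω))
    (hPne : P.Nonempty) (hPcpt : IsCompact P)
    (hPconv : Convex ℝ≥0 (ProbabilityMeasure.toMeasure '' P))
    (hQne : Q.Nonempty) (hQsub : Q ⊆ P) (hQcl : IsClosed Q)
    (hQconv : Convex ℝ≥0 (ProbabilityMeasure.toMeasure '' Q))
    (Pstar : ProbabilityMeasure Ω) :
    List.TFAE
      [ Pstar ∈ Q,
        ∀ f : Ω → ℝ, Measurable f → (∀ ω, f ω ∈ Icc (0 : ℝ) 1) →
          ∀ x : ℝ, MEU Q f > x → (∫ ω, f ω ∂(Pstar : Measure Ω)) > x,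
        ∀ f g : Ω → ℝ,
          Measurable f → (∀ ω, f ω ∈ Icc (0 : ℝ) 1) →
          Measurable g → (∀ ω, g ω ∈ Icc (0 : ℝ) 1) →
          MEU Q g ≥ MEU Q f →
          (∫ ω, g ω ∂(Pstar : Measure Ω)) ≥ MEU P f ] := by
  have hQcpt : IsCompact Q := hPcpt.of_isClosed_subset hQcl hQsub
  tfae_have 1 → 2 := by
    intro hmem f hfm hf x hx
    exact lt_of_lt_of_le hx (MEU_le_integral (fun ω => (hf ω).1) hmem)
  tfae_have 1 → 3 := by
    intro hmem f g hfm hf hgm hg hge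
    calc MEU P f ≤ MEU Q f := MEU_mono hQsub hQne (fun ω => (hf ω).1)
      _ ≤ MEU Q g := hge
      _ ≤ ∫ ω, g ω ∂(Pstar : Measure Ω) := MEU_le_integral (fun ω => (hg ω).1) hmem
  tfae_have 2 → 1 := by
    intro h2
    by_contra hPs
    obtain ⟨f, hfm, hf, x, hlt, hle⟩ := exists_separating_act hQne hQcpt hQconv hPs
    have := h2 f hfm hf (∫ ω, f ω ∂(Pstar : Measure Ω)) (lt_of_lt_of_le hlt hle)
    exact lt_irrefl _ this
  tfae_have 3 → 1 := by
    intro h3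
    by_contra hPs
    obtain ⟨h, hhm, hh, x, hlt, hle⟩ := exists_separating_act hQne hQcpt hQconv hPs
    set c := MEU Q h with hc
    have hc0 : 0 ≤ c := MEU_nonneg hQne (fun ω => (hh ω).1)
    have hc1 : c ≤ 1 := MEU_le_one hQne hhm hh
    have hkey := h3 (fun _ => c) h (measurable_const) (fun _ => ⟨hc0, hc1⟩) hhm hh
      (by rw [MEU_const hQne])
    rw [MEU_const hPne] at hkey
    have : c ≤ ∫ ω, h ω ∂(Pstar : Measure Ω) := hkey
    linarith [lt_of_lt_of_le hlt hle]
  tfae_finish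
end

section
/- Let S be a finite nonempty set and let P = ⊗_{i ∈ ℕ} μ_i be an infinite product probability measure on Ω = S^ℕ with marginals μ_i on S. Fix ε > 0 and, for sample data ω_N (the first N coordinates of ω), define the average-then-update updated set 𝒫(ω_N) = { Q ∈ 𝒫 : max_{s ∈ S} |Q̄_N(s) − Φ(ω_N)(s)| < ε }, where 𝒫 is any set of product probability measures on S^ℕ containing P, Q̄_N is the average of the first N marginals of Q, and Φ(ω_N) is the empirical distribution. Then for P-almost every ω there exists N̄(ω) such that for all N ≥ N̄(ω), P ∈ 𝒫(ω_N); i.e., the updated sets given by average-then-update accommodate the truth asymptotically almost surely. -/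
open MeasureTheory Filter ProbabilityTheory
open scoped NNReal

/-- Strong law of large numbers for independent (not necessarily identically
distributed) `[0,1]`-valued random variables, in the weak "eventually within
`ε`" form needed below. -/
lemma slln_bounded
    {Ω : Type*} [MeasurableSpace Ω] (P : Measure Ω) [IsProbabilityMeasure P]
    (Y : ℕ → Ω → ℝ) (hmeas : ∀ i, Measurable (Y i))
    (hb : ∀ i ω, Y i ω ∈ Set.Icc (0:ℝ) 1)
    (hind : ∀ i j, i ≠ j → IndepFun (Y i) (Y j) P)
    (m : ℕ → ℝ) (hm : ∀ i, P[Y i] = m i)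
    {ε : ℝ} (hε : 0 < ε) :
    ∀ᵐ ω ∂P, ∃ N0 : ℕ, ∀ N ≥ N0,
      |(N:ℝ)⁻¹ * ∑ i ∈ Finset.range N, m i
        - (N:ℝ)⁻¹ * ∑ i ∈ Finset.range N, Y i ω| < ε := by
  set δ : ℝ := ε / 2 with hδdef
  have hδ : 0 < δ := half_pos hε
  have hY2 : ∀ i, MemLp (Y i) 2 P := fun i =>
    MemLp.of_bound (hmeas i).aestronglyMeasurable 1 (ae_of_all _ fun ω => by
      have h := hb i ω
      rw [Real.norm_eq_abs, abs_le]
      exact ⟨by linarith [h.1], h.2⟩)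
  have hYint : ∀ i, Integrable (Y i) P := fun i => (hY2 i).integrable one_le_two
  have hm0 : ∀ i, 0 ≤ m i := fun i => by
    rw [← hm i]; exact integral_nonneg fun ω => (hb i ω).1
  have hm1 : ∀ i, m i ≤ 1 := fun i => by
    rw [← hm i]
    have h2 : ∫ x, Y i x ∂P ≤ ∫ _x, (1:ℝ) ∂P :=
      integral_mono (hYint i) (integrable_const 1) fun ω => (hb i ω).2
    simpa using h2
  have hvar : ∀ i, variance (Y i) P ≤ 1 := fun i => by
    rw [variance_eq_sub (hY2 i)]
    have h1 : ∫ x, ((Y i) ^ 2) x ∂P ≤ 1 := by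
      have h2 : ∫ x, ((Y i) ^ 2) x ∂P ≤ ∫ _x, (1:ℝ) ∂P := by
        refine integral_mono (hY2 i).integrable_sq (integrable_const 1) fun ω => ?_
        have h := hb i ω
        simp only [Pi.pow_apply]
        nlinarith [h.1, h.2]
      simpa using h2
    nlinarith [sq_nonneg (∫ x, Y i x ∂P), h1]
  -- partial sums
  set T : ℕ → Ω → ℝ := fun N => ∑ i ∈ Finset.range N, Y i with hTdef
  set M : ℕ → ℝ := fun N => ∑ i ∈ Finset.range N, m i with hMdef
  have hTapp : ∀ N ω, T N ω = ∑ i ∈ Finset.range N, Y i ω := fun N ω => by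
    simp [hTdef, Finset.sum_apply]
  have hTmem : ∀ N, MemLp (T N) 2 P := fun N =>
    memLp_finset_sum' _ fun i _ => hY2 i
  have hTmean : ∀ N, ∫ x, T N x ∂P = M N := fun N => by
    have h1 : ∫ x, T N x ∂P = ∫ x, ∑ i ∈ Finset.range N, Y i x ∂P := by
      simp only [hTapp]
    rw [h1, integral_finset_sum _ fun i _ => hYint i, hMdef]
    exact Finset.sum_congr rfl fun i _ => hm i
  have hTvar : ∀ N, variance (T N) P ≤ N := fun N => by
    have h1 : variance (T N) P = ∑ i ∈ Finset.range N, variance (Y i) P := by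
      rw [hTdef]
      exact IndepFun.variance_sum (fun i _ => hY2 i)
        (fun i _ j _ hij => hind i j hij)
    rw [h1]
    calc ∑ i ∈ Finset.range N, variance (Y i) P
        ≤ ∑ _i ∈ Finset.range N, (1:ℝ) := Finset.sum_le_sum fun i _ => hvar i
      _ = N := by simp
  -- Chebyshev events along the squares
  set A : ℕ → Set Ω := fun k =>
    {ω | δ * (((k+1)^2 : ℕ) : ℝ) ≤ |T ((k+1)^2) ω - M ((k+1)^2)|} with hAdef
  have hA : ∀ k, P (A k) ≤ ENNReal.ofReal (δ⁻¹ ^ 2 * (((k:ℝ)+1) ^ 2)⁻¹) := by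
    intro k
    have hnpos : (0:ℝ) < (((k+1)^2 : ℕ) : ℝ) := by positivity
    have hcheb := meas_ge_le_variance_div_sq (μ := P) (hTmem ((k+1)^2))
      (c := δ * (((k+1)^2 : ℕ) : ℝ)) (mul_pos hδ hnpos)
    rw [hTmean] at hcheb
    refine le_trans (le_of_eq rfl) (le_trans hcheb (ENNReal.ofReal_le_ofReal ?_))
    have hv : variance (T ((k+1)^2)) P ≤ (((k+1)^2 : ℕ) : ℝ) := hTvar ((k+1)^2)
    have hn1 : (((k+1)^2 : ℕ) : ℝ) = ((k:ℝ)+1)^2 := by push_cast; ring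
    calc variance (T ((k+1)^2)) P / (δ * (((k+1)^2 : ℕ) : ℝ)) ^ 2
        ≤ (((k+1)^2 : ℕ) : ℝ) / (δ * (((k+1)^2 : ℕ) : ℝ)) ^ 2 := by
          apply div_le_div_of_nonneg_right hv
          positivity
      _ = δ⁻¹ ^ 2 * (((k:ℝ)+1) ^ 2)⁻¹ := by
          rw [hn1]; field_simp
  -- Borel–Cantelli
  have hsum : Summable (fun k : ℕ => δ⁻¹ ^ 2 * (((k:ℝ)+1) ^ 2)⁻¹) := by
    apply Summable.mul_left
    have h1 : Summable (fun n : ℕ => ((n:ℝ) ^ 2)⁻¹) :=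
      Real.summable_nat_pow_inv.2 one_lt_two
    have h2 := (summable_nat_add_iff 1).2 h1
    exact h2.congr fun n => by push_cast; ring_nf
  have htop : (∑' k, P (A k)) ≠ ⊤ := by
    refine ne_top_of_le_ne_top ?_ (ENNReal.tsum_le_tsum hA)
    rw [← ENNReal.ofReal_tsum_of_nonneg (fun k => by positivity) hsum]
    exact ENNReal.ofReal_ne_top
  have hBC : P (limsup A atTop) = 0 := measure_limsup_atTop_eq_zero htop
  have hae : ∀ᵐ ω ∂P, ω ∉ limsup A atTop := by
    rw [ae_iff]
    simpa using hBC
  filter_upwards [hae] with ω hω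
  rw [mem_limsup_iff_frequently_mem, Filter.not_frequently] at hω
  rw [eventually_atTop] at hω
  obtain ⟨K, hK⟩ := hω
  -- deterministic part
  set L : ℕ := max K (⌈2/δ⌉₊ + 1) with hLdef
  refine ⟨(L+1)^2, fun N hN => ?_⟩
  set k : ℕ := Nat.sqrt N with hkdef
  have hk1 : L + 1 ≤ k := by
    have h1 : Nat.sqrt ((L+1)^2) ≤ Nat.sqrt N := Nat.sqrt_le_sqrt hN
    rwa [Nat.sqrt_eq' (L+1)] at h1
  have hkN : k^2 ≤ N := by
    have h1 := Nat.sqrt_le' N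
    rw [← hkdef] at h1
    nlinarith [h1]
  have hNk : N < (k+1)^2 := by
    have h1 := Nat.lt_succ_sqrt' N
    rw [← hkdef] at h1
    nlinarith [h1]
  -- control at k^2
  obtain ⟨j, hjk⟩ : ∃ j, k = j + 1 := ⟨k - 1, by omega⟩
  have hjK : j ≥ K := by omega
  have hctrl : |T (k^2) ω - M (k^2)| < δ * ((k:ℝ))^2 := by
    have h1 := hK j hjK
    rw [hAdef] at h1
    simp only [Set.mem_setOf_eq, not_le] at h1
    rw [hjk]
    calc |T ((j+1)^2) ω - M ((j+1)^2)| < δ * (((j+1)^2 : ℕ) : ℝ) := h1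
      _ = δ * (((j+1:ℕ):ℝ))^2 := by push_cast; ring
  -- increments
  have hdiff : |(T N ω - M N) - (T (k^2) ω - M (k^2))| ≤ ((N - k^2 : ℕ) : ℝ) := by
    have h1 : (T N ω - M N) - (T (k^2) ω - M (k^2))
        = ∑ i ∈ Finset.Ico (k^2) N, (Y i ω - m i) := by
      have e1 : M N - M (k^2) = ∑ i ∈ Finset.Ico (k^2) N, m i := by
        simp only [hMdef]
        exact (Finset.sum_Ico_eq_sub _ hkN).symm
      have e2 : T N ω - T (k^2) ω = ∑ i ∈ Finset.Ico (k^2) N, Y i ω := by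
        rw [hTapp, hTapp]
        exact (Finset.sum_Ico_eq_sub _ hkN).symm
      rw [Finset.sum_sub_distrib, ← e1, ← e2]
      ring
    rw [h1]
    calc |∑ i ∈ Finset.Ico (k^2) N, (Y i ω - m i)|
        ≤ ∑ i ∈ Finset.Ico (k^2) N, |Y i ω - m i| := Finset.abs_sum_le_sum_abs _ _
      _ ≤ ∑ _i ∈ Finset.Ico (k^2) N, (1:ℝ) := by
          refine Finset.sum_le_sum fun i _ => ?_
          have h2 := hb i ω
          rw [abs_le]
          exact ⟨by linarith [h2.1, hm1 i], by linarith [h2.2, hm0 i]⟩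
      _ = ((N - k^2 : ℕ) : ℝ) := by
          rw [Finset.sum_const, Nat.card_Ico]; simp
  have hcast1 : ((N - k^2 : ℕ) : ℝ) = (N:ℝ) - (k:ℝ)^2 := by
    push_cast [hkN]; ring
  have hk2N : ((k:ℝ))^2 ≤ (N:ℝ) := by exact_mod_cast hkN
  have hNk2 : (N:ℝ) - (k:ℝ)^2 ≤ 2*(k:ℝ) := by
    have h1 : N ≤ k^2 + 2*k := by
      have h2 : (k+1)^2 = k^2 + 2*k + 1 := by ring
      omega
    have h3 : (N:ℝ) ≤ (k:ℝ)^2 + 2*(k:ℝ) := by exact_mod_cast h1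
    linarith
  have hklarge : 2/δ < (k:ℝ) := by
    have h1 : ⌈2/δ⌉₊ + 2 ≤ k := by omega
    have h2 : ((⌈2/δ⌉₊:ℝ)) + 2 ≤ (k:ℝ) := by exact_mod_cast h1
    have h3 := Nat.le_ceil (2/δ)
    linarith
  have h2k : 2*(k:ℝ) < δ * (k:ℝ)^2 := by
    have hkpos : (0:ℝ) < (k:ℝ) := by
      have h4 : (1:ℕ) ≤ k := by omega
      exact_mod_cast Nat.lt_of_lt_of_le Nat.zero_lt_one h4
    have h1 : 2 < δ * (k:ℝ) := by
      rw [div_lt_iff₀ hδ] at hklarge; linarith [hklarge]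
    nlinarith
  have hNpos : (0:ℝ) < (N:ℝ) := by
    have h4 : (1:ℕ) ≤ N := by
      have := hkN; nlinarith [hk1]
    exact_mod_cast Nat.lt_of_lt_of_le Nat.zero_lt_one h4
  have hmain : |T N ω - M N| < ε * (N:ℝ) := by
    calc |T N ω - M N|
        ≤ |T (k^2) ω - M (k^2)| + |(T N ω - M N) - (T (k^2) ω - M (k^2))| := by
          have h5 := abs_add_le (T (k^2) ω - M (k^2))
            ((T N ω - M N) - (T (k^2) ω - M (k^2)))
          simpa using h5
      _ < δ * (k:ℝ)^2 + ((N:ℝ) - (k:ℝ)^2) := by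
          rw [← hcast1]
          exact add_lt_add_of_lt_of_le hctrl hdiff
      _ < ε * (N:ℝ) := by
          have h6 : δ * (k:ℝ)^2 ≤ δ * (N:ℝ) := mul_le_mul_of_nonneg_left hk2N hδ.le
          have h7 : (N:ℝ) - (k:ℝ)^2 ≤ 2*(k:ℝ) := hNk2
          have h8 : ε * (N:ℝ) = δ * (N:ℝ) + δ * (N:ℝ) := by rw [hδdef]; ring
          linarith [h2k, h6, h7]
  calc |(N:ℝ)⁻¹ * ∑ i ∈ Finset.range N, m i
        - (N:ℝ)⁻¹ * ∑ i ∈ Finset.range N, Y i ω|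
      = (N:ℝ)⁻¹ * |T N ω - M N| := by
        rw [← mul_sub, abs_mul, abs_of_nonneg (inv_nonneg.2 hNpos.le),
          hTapp, hMdef, abs_sub_comm]
    _ < (N:ℝ)⁻¹ * (ε * (N:ℝ)) :=
        mul_lt_mul_of_pos_left hmain (inv_pos.2 hNpos)
    _ = ε := by field_simp

/-- **Theorem 4 (average-then-update accommodates the truth asymptotically
almost surely).** A DGP is represented by its sequence of marginals
`ν : ℕ → Measure S`; the initial set `PP` is any set of such DGPs containing
the true one `μ`, whose joint law on `S^ℕ` is `P` (independent coordinates
with marginals `μ i`).  For the average-then-update rule with tolerance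
`ε > 0`, `P`-almost surely the true DGP `μ` eventually belongs to every
updated set. -/
theorem average_then_update_accommodates_truth
    {S : Type*} [Fintype S] [Nonempty S] [DecidableEq S] [MeasurableSpace S]
    [MeasurableSingletonClass S]
    (μ : ℕ → Measure S) (hμ : ∀ i, IsProbabilityMeasure (μ i))
    (P : Measure (ℕ → S)) (hP : IsProbabilityMeasure P)
    (hmarg : ∀ i, P.map (fun ω => ω i) = μ i)
    (hindep : ProbabilityTheory.iIndepFun
      (fun i (ω : ℕ → S) => ω i) P)
    (PP : Set (ℕ → Measure S)) (hPPprob : ∀ ν ∈ PP, ∀ i, IsProbabilityMeasure (ν i))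
    (hμPP : μ ∈ PP)
    (ε : ℝ) (hε : 0 < ε) :
    ∀ᵐ ω ∂P, ∃ N0 : ℕ, ∀ N ≥ N0,
      μ ∈ {ν ∈ PP |
        (⨆ s : S,
          |(N : ℝ)⁻¹ * ∑ i ∈ Finset.range N, (ν i {s}).toReal
            - (N : ℝ)⁻¹ * ∑ i ∈ Finset.range N, (if ω i = s then (1 : ℝ) else 0)|)
          < ε} := by
  classical
  have hfmeas : ∀ s : S, Measurable (fun x : S => if x = s then (1:ℝ) else 0) := by
    intro s
    have h1 : MeasurableSet {x : S | x = s} := by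
      simpa using measurableSet_eq (a := s)
    exact Measurable.ite h1 measurable_const measurable_const
  have key : ∀ s : S, ∀ᵐ ω ∂P, ∃ N0 : ℕ, ∀ N ≥ N0,
      |(N:ℝ)⁻¹ * ∑ i ∈ Finset.range N, (μ i {s}).toReal
        - (N:ℝ)⁻¹ * ∑ i ∈ Finset.range N, (if ω i = s then (1:ℝ) else 0)| < ε := by
    intro s
    refine slln_bounded P (fun i ω => if ω i = s then (1:ℝ) else 0)
      (fun i => (hfmeas s).comp (measurable_pi_apply i))
      (fun i ω => by by_cases h : ω i = s <;> simp [h])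
      (fun i j hij => (hindep.indepFun hij).comp (hfmeas s) (hfmeas s))
      (fun i => (μ i {s}).toReal) (fun i => ?_) hε
    have h1 : (fun ω : ℕ → S => if ω i = s then (1:ℝ) else 0)
        = Set.indicator ((fun ω : ℕ → S => ω i) ⁻¹' {s}) (fun _ => (1:ℝ)) := by
      funext ω
      simp [Set.indicator_apply, Set.mem_preimage]
    rw [h1, integral_indicator_const _
      ((measurable_pi_apply i) (measurableSet_singleton s))]
    simp only [smul_eq_mul, mul_one, measureReal_def]
    rw [← Measure.map_apply (measurable_pi_apply i) (measurableSet_singleton s),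
      hmarg i]
  have key' : ∀ᵐ ω ∂P, ∀ s : S, ∃ N0 : ℕ, ∀ N ≥ N0,
      |(N:ℝ)⁻¹ * ∑ i ∈ Finset.range N, (μ i {s}).toReal
        - (N:ℝ)⁻¹ * ∑ i ∈ Finset.range N, (if ω i = s then (1:ℝ) else 0)| < ε :=
    (ae_all_iff).2 key
  filter_upwards [key'] with ω hω
  choose N0 hN0 using hω
  refine ⟨Finset.univ.sup N0, fun N hN => ?_⟩
  refine ⟨hμPP, ?_⟩
  have hlt : ∀ s : S,
      |(N:ℝ)⁻¹ * ∑ i ∈ Finset.range N, (μ i {s}).toReal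
        - (N:ℝ)⁻¹ * ∑ i ∈ Finset.range N, (if ω i = s then (1:ℝ) else 0)| < ε :=
    fun s => hN0 s N (le_trans (Finset.le_sup (Finset.mem_univ s)) hN)
  have hne : (Finset.univ : Finset S).Nonempty := Finset.univ_nonempty
  set f : S → ℝ := fun s =>
    |(N:ℝ)⁻¹ * ∑ i ∈ Finset.range N, (μ i {s}).toReal
      - (N:ℝ)⁻¹ * ∑ i ∈ Finset.range N, (if ω i = s then (1:ℝ) else 0)| with hfdef
  have h1 : (⨆ s : S, f s) ≤ Finset.univ.sup' hne f :=
    ciSup_le fun s => Finset.le_sup' f (Finset.mem_univ s)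
  exact lt_of_le_of_lt h1 ((Finset.sup'_lt_iff hne).2 fun s _ => hlt s)
end

section
/- Let d ≥ 2, N ≥ 1, and let p_1, …, p_N ∈ ℝ^{d−1} be vectors with strictly positive entries whose coordinates sum to strictly less than 1 (full-support marginal probability vectors over the first d−1 of d outcomes). For such a vector p, let Σ(p) = diag(p) − p pᵀ. Let Σ̄ = N⁻¹ Σ_{i=1}^N Σ(p_i) and Σ̂ = Σ(p̄) where p̄ = N⁻¹ Σ_{i=1}^N p_i; then Σ̄ and Σ̂ are positive definite, and for every x ∈ ℝ^{d−1} one has xᵀ Σ̂⁻¹ x ≤ xᵀ Σ̄⁻¹ x. Consequently, for every c ∈ ℝ, the ellipsoid { x : xᵀ Σ̄⁻¹ x ≤ c } is contained in the ellipsoid { x : xᵀ Σ̂⁻¹ x ≤ c }; i.e., the Gaussian probability contour corresponding to the non-identical sequence is contained in the contour corresponding to the i.i.d. sequence with the same average marginal. -/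
open Matrix

/-- The multinomial covariance matrix `Σ(p) = diag(p) − p pᵀ` associated with a
marginal probability vector `p` over the first `d − 1` of `d` outcomes. -/
noncomputable def multinomialCov {ι : Type*} [Fintype ι] [DecidableEq ι]
    (p : ι → ℝ) : Matrix ι ι ℝ :=
  Matrix.diagonal p - Matrix.vecMulVec p p

section Aux

variable {ι : Type*} [Fintype ι] [DecidableEq ι]

lemma quad_cov (p x : ι → ℝ) :
    x ⬝ᵥ (multinomialCov p *ᵥ x) = (∑ k, p k * x k ^ 2) - (∑ k, p k * x k) ^ 2 := by
  rw [multinomialCov, sub_mulVec, dotProduct_sub]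
  congr 1
  · simp only [dotProduct, mulVec_diagonal]
    exact Finset.sum_congr rfl fun k _ => by ring
  · have : x ⬝ᵥ (vecMulVec p p *ᵥ x) = ∑ i, ∑ j, (p i * x i) * (p j * x j) := by
      simp only [dotProduct, mulVec, vecMulVec_apply, Finset.mul_sum]
      exact Finset.sum_congr rfl fun i _ => Finset.sum_congr rfl fun j _ => by ring
    rw [this, ← Finset.sum_mul_sum, sq]

lemma herm_cov (p : ι → ℝ) : (multinomialCov p).IsHermitian := by
  refine Matrix.IsHermitian.sub (Matrix.isHermitian_diagonal _) ?_
  ext i j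
  simp [vecMulVec_apply, mul_comm]

lemma herm_apply {A : Matrix ι ι ℝ} (h : A.IsHermitian) (i j : ι) : A i j = A j i := by
  conv_lhs => rw [← h.eq]
  simp [conjTranspose_apply]

lemma transpose_eq_of_herm {A : Matrix ι ι ℝ} (h : A.IsHermitian) : Aᵀ = A := by
  ext i j
  rw [transpose_apply]
  conv_rhs => rw [← h.eq]
  simp [conjTranspose_apply]

lemma posdef_cov {p : ι → ℝ} (hpos : ∀ k, 0 < p k) (hsum : (∑ k, p k) < 1) :
    (multinomialCov p).PosDef := by
  refine Matrix.PosDef.of_dotProduct_mulVec_pos (herm_cov p) fun x hx => ?_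
  have hstar : star x = x := by ext k; simp
  rw [hstar, quad_cov]
  have hxk : ∃ k, x k ≠ 0 := by
    by_contra h; push_neg at h; exact hx (funext h)
  obtain ⟨k0, hk0⟩ := hxk
  have hq : 0 < ∑ k, p k * x k ^ 2 := by
    refine Finset.sum_pos' (fun k _ => mul_nonneg (hpos k).le (sq_nonneg _))
      ⟨k0, Finset.mem_univ _, ?_⟩
    have := hpos k0
    positivity
  have hcs : (∑ k, p k * x k) ^ 2 ≤ (∑ k, p k) * ∑ k, p k * x k ^ 2 := by
    have h := Finset.sum_mul_sq_le_sq_mul_sq Finset.univ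
      (fun k => Real.sqrt (p k)) (fun k => Real.sqrt (p k) * x k)
    have e1 : ∀ k, Real.sqrt (p k) * (Real.sqrt (p k) * x k) = p k * x k := fun k => by
      rw [← mul_assoc, Real.mul_self_sqrt (hpos k).le]
    have e2 : ∀ k, Real.sqrt (p k) ^ 2 = p k := fun k => Real.sq_sqrt (hpos k).le
    have e3 : ∀ k, (Real.sqrt (p k) * x k) ^ 2 = p k * x k ^ 2 := fun k => by
      rw [mul_pow, e2]
    simp only [e1, e2, e3] at h
    exact h
  have : (∑ k, p k) * (∑ k, p k * x k ^ 2) < 1 * (∑ k, p k * x k ^ 2) :=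
    mul_lt_mul_of_pos_right hsum hq
  rw [one_mul] at this
  linarith

/-- Key inequality: for a positive definite `A`, `xᵀ A⁻¹ x ≥ 2 xᵀ y − yᵀ A y`. -/
lemma inv_quad_ge {A : Matrix ι ι ℝ} (hA : A.PosDef) (x y : ι → ℝ) :
    2 * (x ⬝ᵥ y) - y ⬝ᵥ (A *ᵥ y) ≤ x ⬝ᵥ (A⁻¹ *ᵥ x) := by
  have hdet : IsUnit A.det := isUnit_iff_ne_zero.mpr hA.det_pos.ne'
  have hAinv : A * A⁻¹ = 1 := Matrix.mul_nonsing_inv _ hdet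
  have hT : Aᵀ = A := transpose_eq_of_herm hA.isHermitian
  set w : ι → ℝ := A⁻¹ *ᵥ x with hw
  have hAw : A *ᵥ w = x := by
    rw [hw, mulVec_mulVec, hAinv, one_mulVec]
  have h0 : 0 ≤ (y - w) ⬝ᵥ (A *ᵥ (y - w)) := by
    have := (posSemidef_iff_dotProduct_mulVec.mp hA.posSemidef).2 (y - w)
    have hstar : star (y - w) = y - w := by ext k; simp
    rwa [hstar] at this
  have hwAy : w ⬝ᵥ (A *ᵥ y) = x ⬝ᵥ y := by
    rw [Matrix.dotProduct_mulVec, ← Matrix.mulVec_transpose, hT, hAw]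
  have hexp : (y - w) ⬝ᵥ (A *ᵥ (y - w))
      = y ⬝ᵥ (A *ᵥ y) - y ⬝ᵥ x - x ⬝ᵥ y + w ⬝ᵥ x := by
    rw [mulVec_sub, dotProduct_sub, sub_dotProduct, sub_dotProduct, hAw, hwAy]
    ring
  have hyx : y ⬝ᵥ x = x ⬝ᵥ y := dotProduct_comm _ _
  have hwx : w ⬝ᵥ x = x ⬝ᵥ w := dotProduct_comm _ _
  rw [hexp, hyx, hwx] at h0
  linarith

end Aux

/-- **Ellipsoid inclusion lemma.** For full-support marginals, both the average
covariance matrix `Σ̄` of the non-identical sequence and the covariance matrix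
`Σ̂` of the i.i.d. sequence with the same average marginal are positive
definite, the quadratic form of `Σ̂⁻¹` is dominated by that of `Σ̄⁻¹`, and
hence each ellipsoid `{x : xᵀ Σ̄⁻¹ x ≤ c}` is contained in
`{x : xᵀ Σ̂⁻¹ x ≤ c}`. -/
theorem gaussian_contour_inclusion
    (d N : ℕ) (hd : 2 ≤ d) (hN : 1 ≤ N)
    (p : Fin N → Fin (d - 1) → ℝ)
    (hpos : ∀ i k, 0 < p i k)
    (hsum : ∀ i, (∑ k, p i k) < 1) :
    ((N : ℝ)⁻¹ • ∑ i, multinomialCov (p i)).PosDef ∧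
    (multinomialCov ((N : ℝ)⁻¹ • ∑ i, p i)).PosDef ∧
    (∀ x : Fin (d - 1) → ℝ,
      x ⬝ᵥ ((multinomialCov ((N : ℝ)⁻¹ • ∑ i, p i))⁻¹ *ᵥ x)
        ≤ x ⬝ᵥ (((N : ℝ)⁻¹ • ∑ i, multinomialCov (p i))⁻¹ *ᵥ x)) ∧
    (∀ c : ℝ,
      {x : Fin (d - 1) → ℝ |
          x ⬝ᵥ (((N : ℝ)⁻¹ • ∑ i, multinomialCov (p i))⁻¹ *ᵥ x) ≤ c}
        ⊆ {x : Fin (d - 1) → ℝ |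
          x ⬝ᵥ ((multinomialCov ((N : ℝ)⁻¹ • ∑ i, p i))⁻¹ *ᵥ x) ≤ c}) := by
  have hN0 : (0 : ℝ) < (N : ℝ) := by exact_mod_cast Nat.lt_of_lt_of_le Nat.zero_lt_one hN
  have hNinv : (0 : ℝ) < (N : ℝ)⁻¹ := inv_pos.mpr hN0
  set pbar : Fin (d - 1) → ℝ := (N : ℝ)⁻¹ • ∑ i, p i with hpbar
  set Abar : Matrix (Fin (d - 1)) (Fin (d - 1)) ℝ :=
    (N : ℝ)⁻¹ • ∑ i, multinomialCov (p i) with hAbar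
  have hne : (Finset.univ : Finset (Fin N)).Nonempty := by
    have : NeZero N := ⟨Nat.one_le_iff_ne_zero.mp hN⟩
    exact Finset.univ_nonempty
  -- quadratic form of Abar
  have hAbarQ : ∀ x : Fin (d - 1) → ℝ,
      x ⬝ᵥ (Abar *ᵥ x) = (N : ℝ)⁻¹ * ∑ i, x ⬝ᵥ (multinomialCov (p i) *ᵥ x) := by
    intro x
    rw [hAbar, smul_mulVec, dotProduct_smul]
    simp only [smul_eq_mul]
    congr 1
    have hmv : (∑ i, multinomialCov (p i)) *ᵥ x = ∑ i, multinomialCov (p i) *ᵥ x := by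
      ext k
      simp only [mulVec, dotProduct, Finset.sum_apply, Matrix.sum_apply, Finset.sum_mul]
      exact Finset.sum_comm
    rw [hmv]
    simp only [dotProduct, Finset.sum_apply, Finset.mul_sum]
    exact Finset.sum_comm
  -- positive definiteness of Abar
  have hAbarPD : Abar.PosDef := by
    refine Matrix.PosDef.of_dotProduct_mulVec_pos ?_ ?_
    · show Abarᴴ = Abar
      ext i j
      rw [conjTranspose_apply, hAbar]
      simp only [Matrix.smul_apply, Matrix.sum_apply, smul_eq_mul, star_trivial]
      congr 1
      exact Finset.sum_congr rfl fun i' _ => herm_apply (herm_cov (p i')) j i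
    · intro x hx
      have hstar : star x = x := by ext k; simp
      rw [hstar, hAbarQ]
      refine mul_pos hNinv (Finset.sum_pos (fun i _ => ?_) hne)
      have h := (posdef_cov (hpos i) (hsum i)).dotProduct_mulVec_pos hx
      have hstar2 : star x = x := by ext k; simp
      rwa [hstar2] at h
  -- pbar is a full-support marginal
  have hpbarpos : ∀ k, 0 < pbar k := by
    intro k
    rw [hpbar]
    simp only [Pi.smul_apply, smul_eq_mul, Finset.sum_apply]
    exact mul_pos hNinv (Finset.sum_pos (fun i _ => hpos i k) hne)
  have hpbarsum : (∑ k, pbar k) < 1 := by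
    have h1 : (∑ k, pbar k) = (N : ℝ)⁻¹ * ∑ i, ∑ k, p i k := by
      rw [hpbar]
      simp only [Pi.smul_apply, smul_eq_mul, Finset.sum_apply, ← Finset.mul_sum]
      rw [Finset.sum_comm]
    have h2 : (∑ i : Fin N, ∑ k, p i k) < ∑ i : Fin N, (1 : ℝ) :=
      Finset.sum_lt_sum_of_nonempty hne fun i _ => hsum i
    rw [h1]
    have : (∑ i : Fin N, (1 : ℝ)) = (N : ℝ) := by simp
    rw [this] at h2
    calc (N : ℝ)⁻¹ * ∑ i, ∑ k, p i k < (N : ℝ)⁻¹ * (N : ℝ) :=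
          mul_lt_mul_of_pos_left h2 hNinv
      _ = 1 := inv_mul_cancel₀ hN0.ne'
  have hBhatPD : (multinomialCov pbar).PosDef := posdef_cov hpbarpos hpbarsum
  -- Loewner comparison: Abar ≤ Bhat on quadratic forms
  have hle : ∀ x : Fin (d - 1) → ℝ,
      x ⬝ᵥ (Abar *ᵥ x) ≤ x ⬝ᵥ (multinomialCov pbar *ᵥ x) := by
    intro x
    have hlin : ∀ f : Fin (d - 1) → ℝ,
        (∑ k, pbar k * f k) = (N : ℝ)⁻¹ * ∑ i, ∑ k, p i k * f k := by
      intro f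
      calc (∑ k, pbar k * f k) = ∑ k, ∑ i, (N : ℝ)⁻¹ * (p i k * f k) := by
            refine Finset.sum_congr rfl fun k _ => ?_
            rw [hpbar]
            simp only [Pi.smul_apply, Finset.sum_apply, smul_eq_mul]
            rw [mul_assoc, Finset.sum_mul, Finset.mul_sum]
        _ = ∑ i, ∑ k, (N : ℝ)⁻¹ * (p i k * f k) := Finset.sum_comm
        _ = (N : ℝ)⁻¹ * ∑ i, ∑ k, p i k * f k := by
            simp_rw [← Finset.mul_sum]
    have h1 := hlin (fun k => x k ^ 2)
    have h2 := hlin x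
    rw [hAbarQ, quad_cov, h1, h2]
    simp only [quad_cov]
    rw [Finset.sum_sub_distrib, mul_sub]
    set s : Fin N → ℝ := fun i => ∑ k, p i k * x k with hs
    have key : ((N : ℝ)⁻¹ * ∑ i, s i) ^ 2 ≤ (N : ℝ)⁻¹ * ∑ i, s i ^ 2 := by
      have hcs : (∑ i, s i) ^ 2 ≤ (N : ℝ) * ∑ i, s i ^ 2 := by
        have := sq_sum_le_card_mul_sum_sq (s := (Finset.univ : Finset (Fin N))) (f := s)
        simpa using this
      have he : ((N : ℝ)⁻¹ * ∑ i, s i) ^ 2 = (N : ℝ)⁻¹ ^ 2 * (∑ i, s i) ^ 2 := by ring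
      rw [he]
      calc (N : ℝ)⁻¹ ^ 2 * (∑ i, s i) ^ 2
          ≤ (N : ℝ)⁻¹ ^ 2 * ((N : ℝ) * ∑ i, s i ^ 2) :=
            mul_le_mul_of_nonneg_left hcs (by positivity)
        _ = (N : ℝ)⁻¹ * (((N : ℝ)⁻¹ * (N : ℝ)) * ∑ i, s i ^ 2) := by ring
        _ = (N : ℝ)⁻¹ * ∑ i, s i ^ 2 := by rw [inv_mul_cancel₀ hN0.ne', one_mul]
    linarith [key]
  -- third conclusion
  have hinv : ∀ x : Fin (d - 1) → ℝ,
      x ⬝ᵥ ((multinomialCov pbar)⁻¹ *ᵥ x) ≤ x ⬝ᵥ (Abar⁻¹ *ᵥ x) := by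
    intro x
    set y : Fin (d - 1) → ℝ := (multinomialCov pbar)⁻¹ *ᵥ x with hy
    have hdet : IsUnit (multinomialCov pbar).det :=
      isUnit_iff_ne_zero.mpr hBhatPD.det_pos.ne'
    have hBy : multinomialCov pbar *ᵥ y = x := by
      rw [hy, mulVec_mulVec, Matrix.mul_nonsing_inv _ hdet, one_mulVec]
    have h1 : 2 * (x ⬝ᵥ y) - y ⬝ᵥ (Abar *ᵥ y) ≤ x ⬝ᵥ (Abar⁻¹ *ᵥ x) :=
      inv_quad_ge hAbarPD x y
    have h2 : y ⬝ᵥ (Abar *ᵥ y) ≤ y ⬝ᵥ (multinomialCov pbar *ᵥ y) := hle y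
    have h3 : y ⬝ᵥ (multinomialCov pbar *ᵥ y) = x ⬝ᵥ y := by
      rw [hBy, dotProduct_comm]
    have h4 : x ⬝ᵥ ((multinomialCov pbar)⁻¹ *ᵥ x) = x ⬝ᵥ y := rfl
    rw [h4]
    linarith
  refine ⟨hAbarPD, hBhatPD, hinv, fun c x hx => ?_⟩
  exact le_trans (hinv x) hx
end
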